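/- For all integers λ₁, λ₂ the following identity holds in F: ((x₁⁻¹+y⁻¹)(x₂⁻¹+y⁻¹)(x₃⁻¹+y⁻¹)/((x₁⁻¹−x₂⁻¹)(x₂⁻¹−x₃⁻¹)(x₁⁻¹−x₃⁻¹)))·[(x₂^{−λ₁−1}x₃^{−λ₂} − x₂^{−λ₂}x₃^{−λ₁−1})/(x₁⁻¹+y⁻¹) + (x₃^{−λ₁−1}x₁^{−λ₂} − x₃^{−λ₂}x₁^{−λ₁−1})/(x₂⁻¹+y⁻¹) + (x₁^{−λ₁−1}x₂^{−λ₂} − x₁^{−λ₂}x₂^{−λ₁−1})/(x₃⁻¹+y⁻¹)] = (R/(Π·y²))·[x₁²(x₂^{1−λ₂}x₃^{−λ₁} − x₂^{−λ₁}x₃^{1−λ₂})/(x₁+y) + x₂²(x₃^{1−λ₂}x₁^{−λ₁} − x₃^{−λ₁}x₁^{1−λ₂})/(x₂+y) + x₃²(x₁^{1−λ₂}x₂^{−λ₁} − x₁^{−λ₁}x₂^{1−λ₂})/(x₃+y)]. (The left side is the character of I_{(λ₁,λ₂,0,0)} with all variables inverted, i.e. the character of the dual module I*_{(λ₁,λ₂,0,0)};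 the right side is the Su–Zhang atypical character formula at the weight (0, 1−λ₂, 1−λ₁ | 2), the case λ₁+2 = λ₄; so ch I*_{(λ₁,λ₂,0,0)} = ch V(0,−λ₂+1,−λ₁+1|2).) -/

import Mathlib

noncomputable section

/-- The field of rational functions over ℚ in four variables. -/
abbrev F : Type := FractionRing (MvPolynomial (Fin 4) ℚ)

def x1 : F := algebraMap (MvPolynomial (Fin 4) ℚ) F (MvPolynomial.X 0)
def x2 : F := algebraMap (MvPolynomial (Fin 4) ℚ) F (MvPolynomial.X 1)
def x3 : F := algebraMap (MvPolynomial (Fin 4) ℚ) F (MvPolynomial.X 2)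
def y  : F := algebraMap (MvPolynomial (Fin 4) ℚ) F (MvPolynomial.X 3)

/-- `R = (x₁+y)(x₂+y)(x₃+y)`. -/
def R : F := (x1 + y) * (x2 + y) * (x3 + y)

/-- `Π = (x₁−x₂)(x₂−x₃)(x₁−x₃)`. -/
def P : F := (x1 - x2) * (x2 - x3) * (x1 - x3)

/-- `a(t,u,v)` : determinant of the 3×3 matrix with `i`-th row `(xᵢ^{t+2}, xᵢ^{u+1}, xᵢ^v)`. -/
def a (t u v : ℤ) : F :=
  Matrix.det !![x1 ^ (t+2), x1 ^ (u+1), x1 ^ v;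
                x2 ^ (t+2), x2 ^ (u+1), x2 ^ v;
                x3 ^ (t+2), x3 ^ (u+1), x3 ^ v]

/-- Complete homogeneous symmetric polynomial of degree `k` in three variables
(`0` for `k < 0`). -/
def hc (u v w : F) (k : ℤ) : F :=
  if k < 0 then 0
  else ∑ i ∈ Finset.range (k.toNat + 1), ∑ j ∈ Finset.range (k.toNat - i + 1),
    u ^ i * v ^ j * w ^ (k.toNat - i - j)

def h (k : ℤ) : F := hc x1 x2 x3 k

def hbar (k : ℤ) : F := hc x1⁻¹ x2⁻¹ x3⁻¹ k

/-- Elementary symmetric polynomials in `x₁, x₂, x₃`. -/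
def e : ℕ → F
  | 0 => 1
  | 1 => x1 + x2 + x3
  | 2 => x1*x2 + x1*x3 + x2*x3
  | 3 => x1*x2*x3
  | _ => 0

/-- Character of the `j`-th super exterior power `Λ_j`. -/
def lamCh (j : ℕ) : F := ∑ r ∈ Finset.range (min 3 j + 1), e r * y ^ (j - r)

/-- Character of the dual `S_j*` of the `j`-th super symmetric power. -/
def sBarCh (j : ℕ) : F := hbar j + y⁻¹ * hbar ((j : ℤ) - 1)

/-- Schur polynomial: `s_μ · Π = det (xᵢ^{μⱼ+3−j})`. -/
def schur (m1 m2 m3 : ℤ) : F := a m1 m2 m3 / P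


lemma inj' : Function.Injective (algebraMap (MvPolynomial (Fin 4) ℚ) F) :=
  IsFractionRing.injective _ _

lemma key' (p : MvPolynomial (Fin 4) ℚ) (v : Fin 4 → ℚ)
    (h : MvPolynomial.eval v p ≠ 0) : algebraMap (MvPolynomial (Fin 4) ℚ) F p ≠ 0 := by
  intro h0
  apply h
  have : p = 0 := inj' (by simpa using h0)
  simp [this]

lemma hx1 : x1 ≠ 0 :=
  key' (MvPolynomial.X 0) (fun i => if i = 0 then 1 else 0) (by simp)
lemma hx2 : x2 ≠ 0 :=
  key' (MvPolynomial.X 1) (fun i => if i = 1 then 1 else 0) (by simp)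
lemma hx3 : x3 ≠ 0 :=
  key' (MvPolynomial.X 2) (fun i => if i = 2 then 1 else 0) (by simp)
lemma hy : y ≠ 0 :=
  key' (MvPolynomial.X 3) (fun i => if i = 3 then 1 else 0) (by simp)
lemma hx1y : x1 + y ≠ 0 := by
  have := key' (MvPolynomial.X 0 + MvPolynomial.X 3) (fun i => if i = 0 then 1 else 0) (by simp)
  simpa [x1, y, map_add] using this
lemma hx2y : x2 + y ≠ 0 := by
  have := key' (MvPolynomial.X 1 + MvPolynomial.X 3) (fun i => if i = 1 then 1 else 0) (by simp)
  simpa [x2, y, map_add] using this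
lemma hx3y : x3 + y ≠ 0 := by
  have := key' (MvPolynomial.X 2 + MvPolynomial.X 3) (fun i => if i = 2 then 1 else 0) (by simp)
  simpa [x3, y, map_add] using this
lemma hx12 : x1 - x2 ≠ 0 := by
  have := key' (MvPolynomial.X 0 - MvPolynomial.X 1) (fun i => if i = 0 then 1 else 0) (by simp)
  simpa [x1, x2, map_sub] using this
lemma hx23 : x2 - x3 ≠ 0 := by
  have := key' (MvPolynomial.X 1 - MvPolynomial.X 2) (fun i => if i = 1 then 1 else 0) (by simp)
  simpa [x2, x3, map_sub] using this
lemma hx13 : x1 - x3 ≠ 0 := by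
  have := key' (MvPolynomial.X 0 - MvPolynomial.X 2) (fun i => if i = 0 then 1 else 0) (by simp)
  simpa [x1, x3, map_sub] using this

set_option maxHeartbeats 16000000 in
/-- `ch I*_{(λ₁,λ₂,0,0)} = ch V(0,−λ₂+1,−λ₁+1|2)`: the character of `I_{(λ₁,λ₂,0,0)}` with
all variables inverted equals the Su–Zhang atypical character at the weight
`(0, 1−λ₂, 1−λ₁ | 2)`. -/
theorem stmt_6 (l1 l2 : ℤ) :
    ((x1⁻¹ + y⁻¹) * (x2⁻¹ + y⁻¹) * (x3⁻¹ + y⁻¹) /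
        ((x1⁻¹ - x2⁻¹) * (x2⁻¹ - x3⁻¹) * (x1⁻¹ - x3⁻¹))) *
      ((x2 ^ (-l1-1) * x3 ^ (-l2) - x2 ^ (-l2) * x3 ^ (-l1-1)) / (x1⁻¹ + y⁻¹)
       + (x3 ^ (-l1-1) * x1 ^ (-l2) - x3 ^ (-l2) * x1 ^ (-l1-1)) / (x2⁻¹ + y⁻¹)
       + (x1 ^ (-l1-1) * x2 ^ (-l2) - x1 ^ (-l2) * x2 ^ (-l1-1)) / (x3⁻¹ + y⁻¹))
    = (R / (P * y^2)) *
      (x1^2 * (x2 ^ (1-l2) * x3 ^ (-l1) - x2 ^ (-l1) * x3 ^ (1-l2)) / (x1 + y)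
       + x2^2 * (x3 ^ (1-l2) * x1 ^ (-l1) - x3 ^ (-l1) * x1 ^ (1-l2)) / (x2 + y)
       + x3^2 * (x1 ^ (1-l2) * x2 ^ (-l1) - x1 ^ (-l1) * x2 ^ (1-l2)) / (x3 + y)) := by
  have key2 : ∀ a b : F, a ≠ 0 → b ≠ 0 → a + b ≠ 0 → a⁻¹ + b⁻¹ ≠ 0 := by
    intro a b ha hb hab h
    apply hab
    have h2 : (a⁻¹ + b⁻¹) * (a * b) = b + a := by
      rw [add_mul, ← mul_assoc, inv_mul_cancel₀ ha, one_mul, mul_comm a b, ← mul_assoc,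
        inv_mul_cancel₀ hb, one_mul]
    rw [h, zero_mul] at h2
    linear_combination -h2
  have key3 : ∀ a b : F, a ≠ 0 → b ≠ 0 → a - b ≠ 0 → a⁻¹ - b⁻¹ ≠ 0 := by
    intro a b ha hb hab h
    apply hab
    have h2 : (a⁻¹ - b⁻¹) * (a * b) = b - a := by
      rw [sub_mul, ← mul_assoc, inv_mul_cancel₀ ha, one_mul, mul_comm a b, ← mul_assoc,
        inv_mul_cancel₀ hb, one_mul]
    rw [h, zero_mul] at h2
    linear_combination h2
  have hi1y : x1⁻¹ + y⁻¹ ≠ 0 := key2 _ _ hx1 hy hx1y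
  have hi2y : x2⁻¹ + y⁻¹ ≠ 0 := key2 _ _ hx2 hy hx2y
  have hi3y : x3⁻¹ + y⁻¹ ≠ 0 := key2 _ _ hx3 hy hx3y
  have hi12 : x1⁻¹ - x2⁻¹ ≠ 0 := key3 _ _ hx1 hx2 hx12
  have hi23 : x2⁻¹ - x3⁻¹ ≠ 0 := key3 _ _ hx2 hx3 hx23
  have hi13 : x1⁻¹ - x3⁻¹ ≠ 0 := key3 _ _ hx1 hx3 hx13
  have e1 : ∀ x : F, x ≠ 0 → x ^ (-l1 - 1) = x ^ (-l1) * x⁻¹ := fun x hx =>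
    zpow_sub_one₀ hx (-l1)
  have e2 : ∀ x : F, x ≠ 0 → x ^ (1 - l2) = x * x ^ (-l2) := fun x hx => by
    rw [show (1 - l2 : ℤ) = -l2 + 1 by ring, zpow_add_one₀ hx]
    ring
  rw [R, P]
  simp only [e1 x1 hx1, e1 x2 hx2, e1 x3 hx3, e2 x1 hx1, e2 x2 hx2, e2 x3 hx3]
  generalize x1 ^ (-l1) = u1
  generalize x2 ^ (-l1) = u2
  generalize x3 ^ (-l1) = u3
  generalize x1 ^ (-l2) = v1
  generalize x2 ^ (-l2) = v2
  generalize x3 ^ (-l2) = v3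
  have hx21 : x2 - x1 ≠ 0 := fun h => hx12 (by linear_combination -h)
  have hx32 : x3 - x2 ≠ 0 := fun h => hx23 (by linear_combination -h)
  have hx31 : x3 - x1 ≠ 0 := fun h => hx13 (by linear_combination -h)
  have hx21 : x2 - x1 ≠ 0 := fun h => hx12 (by linear_combination -h)
  have hx32 : x3 - x2 ≠ 0 := fun h => hx23 (by linear_combination -h)
  have hx31 : x3 - x1 ≠ 0 := fun h => hx13 (by linear_combination -h)
  have hy1 : y + x1 ≠ 0 := fun h => hx1y (by linear_combination h)
  have hy2 : y + x2 ≠ 0 := fun h => hx2y (by linear_combination h)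
  have hy3 : y + x3 ≠ 0 := fun h => hx3y (by linear_combination h)
  have h1 : x1 ≠ 0 := hx1
  have h2 : x2 ≠ 0 := hx2
  have h3 : x3 ≠ 0 := hx3
  have h4 : y ≠ 0 := hy
  have h5 : x1 - x2 ≠ 0 := hx12
  have h6 : x2 - x3 ≠ 0 := hx23
  have h7 : x1 - x3 ≠ 0 := hx13
  have h8 : x1 + y ≠ 0 := hx1y
  have h9 : x2 + y ≠ 0 := hx2y
  have h10 : x3 + y ≠ 0 := hx3y
  field_simp
  ring
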